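/- In the symmetric algebra Sym(V) where V = k^2 ⊕ (k^2)*, with basis x, y, x_1, y_1, the only elements of Sym(V) that are invariant under the natural action of gl_2 (acting diagonally on k^2 ⊕ (k^2)*) are polynomials in b = y_1·x - x_1·y; that is, Sym(V)^{gl_2} = k[b]. -/

import Mathlib

set_option maxHeartbeats 1000000

open MvPolynomial

section Aux

variable {k : Type} [CommRing k]

lemma coeff_X_mul_pderiv {n : ℕ} (i : Fin n)
    (p : MvPolynomial (Fin n) k) (m : Fin n →₀ ℕ) :
    coeff m (X i * pderiv i p) = (m i : k) * coeff m p := by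
  induction p using MvPolynomial.induction_on' with
  | monomial s a =>
    rw [pderiv_monomial, X, monomial_mul]
    simp only [coeff_monomial, one_mul]
    by_cases h0 : s i = 0
    · have h1 : a * (s i : k) = 0 := by simp [h0]
      rw [h1, ite_self]
      split_ifs with h
      · subst h; simp [h0]
      · simp
    · have hkey : Finsupp.single i 1 + (s - Finsupp.single i 1) = s := by
        ext j
        by_cases hj : j = i
        · subst hj; simp [Finsupp.single_apply]; omega
        · simp [Finsupp.single_apply, hj, Ne.symm hj]
      rw [hkey]
      split_ifs with h
      · subst h; ring
      · simp
  | add q r hq hr => simp [mul_add, hq, hr]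

lemma coeff_pderiv' {n : ℕ} (i : Fin n) (p : MvPolynomial (Fin n) k)
    (m : Fin n →₀ ℕ) :
    coeff m (pderiv i p) = ((m i : k) + 1) * coeff (m + Finsupp.single i 1) p := by
  induction p using MvPolynomial.induction_on' with
  | monomial s a =>
    rw [pderiv_monomial]
    simp only [coeff_monomial]
    by_cases hs : s = m + Finsupp.single i 1
    · subst hs
      have h1 : ((m + Finsupp.single i 1) - Finsupp.single i 1) = m := by
        ext j; by_cases hj : j = i <;> simp [Finsupp.single_apply, hj]
      have h2 : (m + Finsupp.single i 1 : Fin n →₀ ℕ) i = m i + 1 := by simp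
      rw [h1, h2]
      simp
      ring
    · rw [if_neg hs]
      by_cases hd : s - Finsupp.single i 1 = m
      · by_cases h0 : s i = 0
        · split_ifs <;> simp [h0]
        · exfalso
          apply hs
          subst hd
          ext j
          by_cases hj : j = i
          · subst hj; simp; omega
          · simp [Finsupp.single_apply, hj, Ne.symm hj]
      · rw [if_neg hd, mul_zero]
  | add q r hq hr => simp [hq, hr]; ring

noncomputable def emb (s : Fin 2 →₀ ℕ) : Fin 4 →₀ ℕ :=
  Finsupp.equivFunOnFinite.symm ![s 0, s 1, s 1, s 0]

@[simp] lemma emb_apply0 (s : Fin 2 →₀ ℕ) : emb s 0 = s 0 := rfl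
@[simp] lemma emb_apply1 (s : Fin 2 →₀ ℕ) : emb s 1 = s 1 := rfl
@[simp] lemma emb_apply2 (s : Fin 2 →₀ ℕ) : emb s 2 = s 1 := rfl
@[simp] lemma emb_apply3 (s : Fin 2 →₀ ℕ) : emb s 3 = s 0 := rfl

lemma emb_inj : Function.Injective emb := by
  intro s t h
  have h0 := congrArg (fun f => f 0) h
  have h1 := congrArg (fun f => f 1) h
  simp only [emb_apply0, emb_apply1] at h0 h1
  ext i
  fin_cases i
  · exact h0
  · exact h1

lemma mono4 (m : Fin 4 →₀ ℕ) (c : k) :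
    monomial m c = C c * X 0 ^ m 0 * X 1 ^ m 1 * X 2 ^ m 2 * X 3 ^ m 3 := by
  rw [monomial_eq, Finsupp.prod_fintype _ _ (fun i => pow_zero _), Fin.prod_univ_four]
  ring

lemma mono2 (m : Fin 2 →₀ ℕ) (c : k) :
    monomial m c = C c * X 0 ^ m 0 * X 1 ^ m 1 := by
  rw [monomial_eq, Finsupp.prod_fintype _ _ (fun i => pow_zero _), Fin.prod_univ_two]
  ring

noncomputable def phi (k : Type) [CommRing k] :
    MvPolynomial (Fin 2) k →ₐ[k] MvPolynomial (Fin 4) k :=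
  aeval ![X 0 * X 3, X 1 * X 2]

lemma phi_monomial (s : Fin 2 →₀ ℕ) (c : k) :
    phi k (monomial s c) = monomial (emb s) c := by
  rw [mono2, mono4]
  simp only [map_mul, map_pow, phi, aeval_C, aeval_X]
  simp [Matrix.cons_val_zero, Matrix.cons_val_one]
  ring

lemma coeff_phi (r : MvPolynomial (Fin 2) k) (m : Fin 2 →₀ ℕ) :
    coeff (emb m) (phi k r) = coeff m r := by
  induction r using MvPolynomial.induction_on' with
  | monomial s a =>
    rw [phi_monomial]
    simp only [coeff_monomial]
    split_ifs with h1 h2 h2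
    · rfl
    · exact absurd (emb_inj h1) h2
    · exact absurd (congrArg emb h2) h1
    · rfl
  | add q r hq hr => simp [hq, hr]

lemma chain_phi (q : MvPolynomial (Fin 2) k) :
    X 0 * pderiv 1 (phi k q) + X 2 * pderiv 3 (phi k q) =
      X 0 * X 2 * phi k (pderiv 0 q + pderiv 1 q) := by
  induction q using MvPolynomial.induction_on with
  | C a => simp [phi]
  | add q r hq hr =>
    simp only [map_add] at hq hr ⊢
    linear_combination hq + hr
  | mul_X q i hq =>
    fin_cases i
    · show X 0 * pderiv 1 (phi k (q * X 0)) + X 2 * pderiv 3 (phi k (q * X 0)) =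
        X 0 * X 2 * phi k (pderiv 0 (q * X 0) + pderiv 1 (q * X 0))
      simp only [map_add, map_mul, pderiv_mul, phi, aeval_X, Matrix.cons_val_zero,
        Matrix.cons_val_one, Matrix.head_cons, pderiv_X_self, mul_one, map_one,
        pderiv_X_of_ne (show (0:Fin 4) ≠ 1 by decide),
        pderiv_X_of_ne (show (0:Fin 4) ≠ 3 by decide),
        pderiv_X_of_ne (show (3:Fin 4) ≠ 1 by decide),
        pderiv_X_of_ne (show (0:Fin 2) ≠ 1 by decide),
        pderiv_X_of_ne (show (1:Fin 2) ≠ 0 by decide),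
        mul_zero, zero_mul, add_zero, zero_add] at hq ⊢
      linear_combination (X 0 * X 3 : MvPolynomial (Fin 4) k) * hq
    · show X 0 * pderiv 1 (phi k (q * X 1)) + X 2 * pderiv 3 (phi k (q * X 1)) =
        X 0 * X 2 * phi k (pderiv 0 (q * X 1) + pderiv 1 (q * X 1))
      simp only [map_add, map_mul, pderiv_mul, phi, aeval_X, Matrix.cons_val_zero,
        Matrix.cons_val_one, Matrix.head_cons, pderiv_X_self, mul_one, map_one,
        pderiv_X_of_ne (show (1:Fin 4) ≠ 3 by decide),
        pderiv_X_of_ne (show (2:Fin 4) ≠ 3 by decide),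
        pderiv_X_of_ne (show (2:Fin 4) ≠ 1 by decide),
        pderiv_X_of_ne (show (0:Fin 2) ≠ 1 by decide),
        pderiv_X_of_ne (show (1:Fin 2) ≠ 0 by decide),
        mul_zero, zero_mul, add_zero, zero_add] at hq ⊢
      linear_combination (X 1 * X 2 : MvPolynomial (Fin 4) k) * hq

noncomputable def psi (k : Type) [CommRing k] :
    MvPolynomial (Fin 2) k →ₐ[k] MvPolynomial (Fin 2) k :=
  aeval ![X 0 + X 1, X 1]

lemma chain_psi (q : MvPolynomial (Fin 2) k) :
    pderiv 1 (psi k q) = psi k (pderiv 0 q + pderiv 1 q) := by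
  induction q using MvPolynomial.induction_on with
  | C a => simp [psi]
  | add q r hq hr =>
    simp only [map_add] at hq hr ⊢
    linear_combination hq + hr
  | mul_X q i hq =>
    fin_cases i
    · show pderiv 1 (psi k (q * X 0)) = psi k (pderiv 0 (q * X 0) + pderiv 1 (q * X 0))
      simp only [map_add, map_mul, pderiv_mul, psi, aeval_X, Matrix.cons_val_zero,
        Matrix.cons_val_one, Matrix.head_cons, pderiv_X_self, mul_one, map_one,
        pderiv_X_of_ne (show (0:Fin 2) ≠ 1 by decide),
        pderiv_X_of_ne (show (1:Fin 2) ≠ 0 by decide),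
        mul_zero, zero_mul, add_zero, zero_add, map_add] at hq ⊢
      linear_combination (X 0 + X 1 : MvPolynomial (Fin 2) k) * hq
    · show pderiv 1 (psi k (q * X 1)) = psi k (pderiv 0 (q * X 1) + pderiv 1 (q * X 1))
      simp only [map_add, map_mul, pderiv_mul, psi, aeval_X, Matrix.cons_val_zero,
        Matrix.cons_val_one, Matrix.head_cons, pderiv_X_self, mul_one, map_one,
        pderiv_X_of_ne (show (0:Fin 2) ≠ 1 by decide),
        pderiv_X_of_ne (show (1:Fin 2) ≠ 0 by decide),
        mul_zero, zero_mul, add_zero, zero_add, map_add] at hq ⊢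
      linear_combination (X 1 : MvPolynomial (Fin 2) k) * hq

lemma psi_inv (q : MvPolynomial (Fin 2) k) :
    aeval ![X 0 - X 1, X 1] (psi k q) = q := by
  have h : (aeval (R := k) ![X 0 - X 1, (X 1 : MvPolynomial (Fin 2) k)]).comp (psi k) =
      AlgHom.id k _ := by
    apply MvPolynomial.algHom_ext
    intro i
    fin_cases i <;> simp [psi]
  calc aeval ![X 0 - X 1, X 1] (psi k q)
      = ((aeval (R := k) ![X 0 - X 1, (X 1 : MvPolynomial (Fin 2) k)]).comp (psi k)) q := (AlgHom.comp_apply _ _ _).symm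
    _ = q := by rw [h]; rfl

end Aux

open MvPolynomial in
theorem stmt0 {k : Type} [Field k] [CharZero k] (p : MvPolynomial (Fin 4) k) :
    (X 0 * pderiv 1 p + X 2 * pderiv 3 p = 0 ∧
     X 1 * pderiv 0 p + X 3 * pderiv 2 p = 0 ∧
     X 0 * pderiv 0 p - X 1 * pderiv 1 p + X 2 * pderiv 2 p - X 3 * pderiv 3 p = 0 ∧
     X 0 * pderiv 0 p + X 1 * pderiv 1 p - X 2 * pderiv 2 p - X 3 * pderiv 3 p = 0) ↔
    p ∈ Algebra.adjoin k ({X 3 * X 0 - X 2 * X 1} : Set (MvPolynomial (Fin 4) k)) := by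
  constructor
  · rintro ⟨hE, -, hH, hT⟩
    -- Step 1: support condition
    have hsupp : ∀ m ∈ p.support, m 0 = m 3 ∧ m 1 = m 2 := by
      intro m hm
      rw [mem_support_iff] at hm
      have h1 := congrArg (coeff m) hH
      have h2 := congrArg (coeff m) hT
      simp only [coeff_add, coeff_sub, coeff_X_mul_pderiv, coeff_zero] at h1 h2
      have e1 : ((m 0 : k) - m 1 + m 2 - m 3) * coeff m p = 0 := by linear_combination h1
      have e2 : ((m 0 : k) + m 1 - m 2 - m 3) * coeff m p = 0 := by linear_combination h2
      rcases mul_eq_zero.mp e1 with e1 | e1; swap; · exact absurd e1 hm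
      rcases mul_eq_zero.mp e2 with e2 | e2; swap; · exact absurd e2 hm
      have n1 : (m 0 : ℕ) + m 2 = m 1 + m 3 := by
        have h : ((m 0 : k) + m 2) = (m 1 : k) + m 3 := by linear_combination e1
        exact_mod_cast h
      have n2 : (m 0 : ℕ) + m 1 = m 2 + m 3 := by
        have h : ((m 0 : k) + m 1) = (m 2 : k) + m 3 := by linear_combination e2
        exact_mod_cast h
      omega
    -- Step 2: p = phi q
    set q : MvPolynomial (Fin 2) k :=
      ∑ m ∈ p.support, monomial (Finsupp.equivFunOnFinite.symm ![m 0, m 1]) (coeff m p)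
      with hq_def
    have hpq : p = phi k q := by
      rw [hq_def, map_sum]
      conv_lhs => rw [p.as_sum]
      apply Finset.sum_congr rfl
      intro m hm
      rw [phi_monomial]
      obtain ⟨h03, h12⟩ := hsupp m hm
      have he : emb (Finsupp.equivFunOnFinite.symm ![m 0, m 1]) = m := by
        ext j
        fin_cases j
        · rfl
        · rfl
        · exact h12
        · exact h03
      rw [he]
    clear_value q
    -- Step 3: pderiv 0 q + pderiv 1 q = 0
    have hD : pderiv 0 q + pderiv 1 q = 0 := by
      have h0 : X 0 * X 2 * phi k (pderiv 0 q + pderiv 1 q) = 0 := by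
        rw [← chain_phi, ← hpq, hE]
      have hX : (X 0 * X 2 : MvPolynomial (Fin 4) k) ≠ 0 :=
        mul_ne_zero (X_ne_zero _) (X_ne_zero _)
      have h1 : phi k (pderiv 0 q + pderiv 1 q) = 0 :=
        (mul_eq_zero.mp h0).resolve_left hX
      ext m
      have := congrArg (coeff (emb m)) h1
      rwa [coeff_phi, coeff_zero] at this
    -- Step 4: r := psi q has pderiv 1 r = 0
    set r := psi k q with hr_def
    clear_value r
    have hr1 : pderiv 1 r = 0 := by rw [hr_def, chain_psi, hD, map_zero]
    -- Step 5: r ∈ adjoin {X 0}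
    have hrsupp : ∀ m ∈ r.support, m 1 = 0 := by
      intro m hm
      rw [mem_support_iff] at hm
      by_contra hne
      set m' : Fin 2 →₀ ℕ := m - Finsupp.single 1 1 with hm'_def
      have hre : m' + Finsupp.single 1 1 = m := by
        ext j
        by_cases hj : j = 1
        · subst hj; simp [hm'_def]; omega
        · simp [hm'_def, Finsupp.single_apply, hj, Ne.symm hj]
      have h := congrArg (coeff m') hr1
      rw [coeff_pderiv', coeff_zero, hre] at h
      rcases mul_eq_zero.mp h with h | h
      · exact (Nat.cast_add_one_ne_zero (m' 1)) h
      · exact hm h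
    have hradj : r ∈ Algebra.adjoin k ({X 0} : Set (MvPolynomial (Fin 2) k)) := by
      rw [r.as_sum]
      apply Subalgebra.sum_mem
      intro m hm
      rw [mono2, hrsupp m hm, pow_zero, mul_one]
      have hX0 : (X 0 : MvPolynomial (Fin 2) k) ∈
          Algebra.adjoin k ({X 0} : Set (MvPolynomial (Fin 2) k)) :=
        Algebra.subset_adjoin (Set.mem_singleton _)
      exact mul_mem (Subalgebra.algebraMap_mem _ _) (pow_mem hX0 _)
    -- Step 6: q ∈ adjoin {X 0 - X 1}
    have hqadj : q ∈ Algebra.adjoin k ({X 0 - X 1} : Set (MvPolynomial (Fin 2) k)) := by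
      have h : aeval ![X 0 - X 1, X 1] r ∈
          (Algebra.adjoin k ({X 0} : Set (MvPolynomial (Fin 2) k))).map
            (aeval (R := k) ![X 0 - X 1, (X 1 : MvPolynomial (Fin 2) k)]) :=
        Subalgebra.mem_map.mpr ⟨r, hradj, rfl⟩
      rw [AlgHom.map_adjoin, Set.image_singleton, aeval_X] at h
      simp only [Matrix.cons_val_zero] at h
      rwa [hr_def, psi_inv] at h
    -- Step 7: conclude
    have hfin : phi k q ∈
        (Algebra.adjoin k ({X 0 - X 1} : Set (MvPolynomial (Fin 2) k))).map (phi k) :=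
      Subalgebra.mem_map.mpr ⟨q, hqadj, rfl⟩
    rw [AlgHom.map_adjoin, Set.image_singleton] at hfin
    have hphib : phi k (X 0 - X 1) = X 3 * X 0 - X 2 * X 1 := by
      simp [phi]
      ring
    rw [hphib] at hfin
    rwa [← hpq] at hfin
  · intro hp
    refine ⟨?_, ?_, ?_, ?_⟩
    · have h := Derivation.eqOn_adjoin (R := k) (M := MvPolynomial (Fin 4) k)
        (D1 := (X 0 : MvPolynomial (Fin 4) k) • pderiv 1 +
               (X 2 : MvPolynomial (Fin 4) k) • pderiv 3) (D2 := 0)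
        (s := {X 3 * X 0 - X 2 * X 1}) ?_ hp
      · simpa [smul_eq_mul] using h
      · intro x hx
        simp only [Set.mem_singleton_iff] at hx
        subst hx
        simp [smul_eq_mul]
        ring
    · have h := Derivation.eqOn_adjoin (R := k) (M := MvPolynomial (Fin 4) k)
        (D1 := (X 1 : MvPolynomial (Fin 4) k) • pderiv 0 +
               (X 3 : MvPolynomial (Fin 4) k) • pderiv 2) (D2 := 0)
        (s := {X 3 * X 0 - X 2 * X 1}) ?_ hp
      · simpa [smul_eq_mul] using h
      · intro x hx
        simp only [Set.mem_singleton_iff] at hx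
        subst hx
        simp [smul_eq_mul]
        ring
    · have h := Derivation.eqOn_adjoin (R := k) (M := MvPolynomial (Fin 4) k)
        (D1 := (X 0 : MvPolynomial (Fin 4) k) • pderiv 0 -
               (X 1 : MvPolynomial (Fin 4) k) • pderiv 1 +
               (X 2 : MvPolynomial (Fin 4) k) • pderiv 2 -
               (X 3 : MvPolynomial (Fin 4) k) • pderiv 3) (D2 := 0)
        (s := {X 3 * X 0 - X 2 * X 1}) ?_ hp
      · simpa [smul_eq_mul, sub_eq_add_neg, add_assoc] using h
      · intro x hx
        simp only [Set.mem_singleton_iff] at hx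
        subst hx
        simp [smul_eq_mul]
        ring
    · have h := Derivation.eqOn_adjoin (R := k) (M := MvPolynomial (Fin 4) k)
        (D1 := (X 0 : MvPolynomial (Fin 4) k) • pderiv 0 +
               (X 1 : MvPolynomial (Fin 4) k) • pderiv 1 -
               (X 2 : MvPolynomial (Fin 4) k) • pderiv 2 -
               (X 3 : MvPolynomial (Fin 4) k) • pderiv 3) (D2 := 0)
        (s := {X 3 * X 0 - X 2 * X 1}) ?_ hp
      · simpa [smul_eq_mul, sub_eq_add_neg, add_assoc] using h
      · intro x hx
        simp only [Set.mem_singleton_iff] at hx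
        subst hx
        simp [smul_eq_mul]
        ring
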